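/- (Product estimate for analytic norms.) Let J be a segment and R > 0. For functions g : J → ℂ define N_R(g) = sup_{p∈ℕ} ‖D^p g‖_J / (p!·R^p). Then for every integer p ≥ 1 and all real-analytic functions g_1, …, g_p on J with N_R(g_j) < ∞ for each j, one has N_{2R}(g_1 ⋯ g_p) ≤ 2^{p-1} · N_R(g_1) ⋯ N_R(g_p). -/

import Mathlib

open scoped Nat BigOperators ENNReal

open Finset

lemma choose_le_two_pow_pred {m k : ℕ} (hm : 1 ≤ m) : m.choose k ≤ 2 ^ (m - 1) := by
  obtain ⟨m', rfl⟩ : ∃ m', m = m' + 1 := ⟨m - 1, (Nat.succ_pred_eq_of_pos hm).symm⟩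
  simp only [Nat.add_sub_cancel]
  cases k with
  | zero => simpa using Nat.one_le_two_pow
  | succ k' =>
    rw [Nat.choose_succ_succ]
    rcases le_or_gt (k' + 1) m' with h | h
    · calc m'.choose k' + m'.choose (k' + 1)
          = ∑ j ∈ ({k', k' + 1} : Finset ℕ), m'.choose j := by
            rw [Finset.sum_pair (by omega)]
        _ ≤ ∑ j ∈ range (m' + 1), m'.choose j := by
            apply Finset.sum_le_sum_of_subset
            intro x hx; simp at hx; simp; omega
        _ = 2 ^ m' := Nat.sum_range_choose m'
    · rw [Nat.choose_eq_zero_of_lt h, Nat.add_zero]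
      rcases le_or_gt k' m' with h2 | h2
      · calc m'.choose k' ≤ ∑ j ∈ range (m' + 1), m'.choose j :=
            Finset.single_le_sum (fun _ _ => Nat.zero_le _) (by simp; omega)
          _ = 2 ^ m' := Nat.sum_range_choose m'
      · rw [Nat.choose_eq_zero_of_lt h2]; exact Nat.zero_le _

lemma key_sum (n m : ℕ) :
    ∑ k ∈ range (n + 1), n.choose k * (k ! * (n - k) ! * (n - k + m).choose m)
      = n ! * (n + (m + 1)).choose (m + 1) := by
  have h1 : ∀ k ∈ range (n + 1),
      n.choose k * (k ! * (n - k) ! * (n - k + m).choose m)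
        = n ! * (n - k + m).choose m := by
    intro k hk
    rw [mem_range] at hk
    have := Nat.choose_mul_factorial_mul_factorial (Nat.lt_succ_iff.mp hk)
    rw [← this]; ring
  rw [Finset.sum_congr rfl h1, ← Finset.mul_sum]
  congr 1
  have h2 : ∑ i ∈ range (n + 1), (n - i + m).choose m
      = ∑ j ∈ range (n + 1), (j + m).choose m := by
    rw [← Finset.sum_range_reflect (fun k => (k + m).choose m) (n + 1)]
    refine Finset.sum_congr rfl fun i hi => ?_
    rw [mem_range] at hi
    have : n + 1 - 1 - i = n - i := by omega
    rw [this]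
  have h3 : ∀ N : ℕ, ∑ j ∈ range (N + 1), (j + m).choose m = (N + m + 1).choose (m + 1) := by
    intro N
    induction N with
    | zero => simp
    | succ N ih =>
      rw [Finset.sum_range_succ, ih]
      have e2 : N + 1 + m = N + m + 1 := by omega
      have e1 : N + 1 + m + 1 = N + m + 1 + 1 := by omega
      rw [e2, Nat.choose_succ_succ (N + m + 1) m, Nat.succ_eq_add_one]
      omega
  rw [h2, h3 n]
  rfl

lemma core {J : Set ℝ} (hJu : UniqueDiffOn ℝ J) {R : ℝ} (hR : 0 < R)
    {ι : Type*} [DecidableEq ι] (s : Finset ι) (g : ι → ℝ → ℂ) (A : ι → ℝ) :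
    (∀ i ∈ s, 0 ≤ A i) → (∀ i ∈ s, ContDiffOn ℝ ⊤ (g i) J) →
    (∀ i ∈ s, ∀ n : ℕ, ∀ t ∈ J, ‖iteratedDerivWithin n (g i) J t‖ ≤ A i * (n ! * R ^ n)) →
    ∀ n : ℕ, ∀ t ∈ J, ‖iteratedDerivWithin n (fun x => ∏ i ∈ s, g i x) J t‖ ≤
      (∏ i ∈ s, A i) * (n ! * R ^ n * ((n + s.card).choose s.card)) := by
  induction s using Finset.induction with
  | empty =>
    intro _ _ _ n t ht
    simp only [Finset.prod_empty, Finset.card_empty, Nat.choose_zero_right, Nat.cast_one,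
      mul_one, one_mul]
    cases n with
    | zero => simp
    | succ n =>
      rw [← norm_iteratedFDerivWithin_eq_norm_iteratedDerivWithin,
        iteratedFDerivWithin_succ_const n (1 : ℂ)]
      simp only [Pi.zero_apply, norm_zero]
      positivity
  | @insert i s hi IH =>
    intro hA hg hb n t ht
    have hAi : 0 ≤ A i := hA i (Finset.mem_insert_self i s)
    have hA' : ∀ j ∈ s, 0 ≤ A j := fun j hj => hA j (Finset.mem_insert_of_mem hj)
    have hg' : ∀ j ∈ s, ContDiffOn ℝ ⊤ (g j) J := fun j hj => hg j (Finset.mem_insert_of_mem hj)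
    have hb' : ∀ j ∈ s, ∀ n : ℕ, ∀ t ∈ J, ‖iteratedDerivWithin n (g j) J t‖ ≤ A j * (n ! * R ^ n) :=
      fun j hj => hb j (Finset.mem_insert_of_mem hj)
    have hgi := hg i (Finset.mem_insert_self i s)
    have hbi := hb i (Finset.mem_insert_self i s)
    have hAs : 0 ≤ ∏ j ∈ s, A j := Finset.prod_nonneg hA'
    have hgs : ContDiffOn ℝ ⊤ (fun x => ∏ j ∈ s, g j x) J := contDiffOn_prod hg'
    have IH' := IH hA' hg' hb'
    set m := s.card with hm
    simp only [Finset.prod_insert hi]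
    rw [← norm_iteratedFDerivWithin_eq_norm_iteratedDerivWithin]
    refine le_trans (norm_iteratedFDerivWithin_mul_le hgi hgs hJu ht le_top) ?_
    calc ∑ k ∈ Finset.range (n + 1), (n.choose k : ℝ) * ‖iteratedFDerivWithin ℝ k (g i) J t‖ *
            ‖iteratedFDerivWithin ℝ (n - k) (fun x => ∏ j ∈ s, g j x) J t‖
        ≤ ∑ k ∈ Finset.range (n + 1), (n.choose k : ℝ) * (A i * (k ! * R ^ k)) *
            ((∏ j ∈ s, A j) * ((n - k)! * R ^ (n - k) * ((n - k + m).choose m))) := by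
          refine Finset.sum_le_sum fun k hk => ?_
          have h1 : ‖iteratedFDerivWithin ℝ k (g i) J t‖ ≤ A i * (k ! * R ^ k) := by
            rw [norm_iteratedFDerivWithin_eq_norm_iteratedDerivWithin]
            exact hbi k t ht
          have h2 : ‖iteratedFDerivWithin ℝ (n - k) (fun x => ∏ j ∈ s, g j x) J t‖ ≤
              (∏ j ∈ s, A j) * ((n - k)! * R ^ (n - k) * ((n - k + m).choose m)) := by
            rw [norm_iteratedFDerivWithin_eq_norm_iteratedDerivWithin]
            exact IH' (n - k) t ht
          gcongr
      _ = ∑ k ∈ Finset.range (n + 1), (A i * ∏ j ∈ s, A j) * (R ^ k * R ^ (n - k)) *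
            ((n.choose k * (k ! * (n - k)! * (n - k + m).choose m) : ℕ) : ℝ) := by
          refine Finset.sum_congr rfl fun k hk => ?_
          push_cast
          ring
      _ = ∑ k ∈ Finset.range (n + 1), (A i * ∏ j ∈ s, A j) * R ^ n *
            ((n.choose k * (k ! * (n - k)! * (n - k + m).choose m) : ℕ) : ℝ) := by
          refine Finset.sum_congr rfl fun k hk => ?_
          rw [Finset.mem_range] at hk
          have hkn : k + (n - k) = n := by omega
          rw [← pow_add, hkn]
      _ = (A i * ∏ j ∈ s, A j) * R ^ n *
            ((∑ k ∈ Finset.range (n + 1),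
              n.choose k * (k ! * (n - k)! * (n - k + m).choose m) : ℕ) : ℝ) := by
          rw [← Finset.mul_sum, Nat.cast_sum]
      _ = (A i * ∏ j ∈ s, A j) *
            (n ! * R ^ n * ((n + (insert i s).card).choose (insert i s).card)) := by
          rw [key_sum n m, Finset.card_insert_of_notMem hi]
          push_cast
          ring

/-- The analytic norm `N_R(g) = sup_{p} ‖D^p g‖_J / (p! R^p)`, valued in `ℝ≥0∞`,
with `‖·‖_J` the sup norm over `J` and derivatives taken within `J`. -/
noncomputable def anorm (J : Set ℝ) (R : ℝ) (g : ℝ → ℂ) : ℝ≥0∞ :=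
  ⨆ p : ℕ, (⨆ t ∈ J, (‖iteratedDerivWithin p g J t‖₊ : ℝ≥0∞)) /
    ENNReal.ofReal (p ! * R ^ p)

theorem stmt15 (a b : ℝ) (hab : a < b) (J : Set ℝ) (hJ : J = Set.Icc a b)
    (R : ℝ) (hR : 0 < R) (p : ℕ) (hp : 1 ≤ p) (g : Fin p → ℝ → ℂ)
    (hg : ∀ i, ContDiffOn ℝ ⊤ (g i) J) (hfin : ∀ i, anorm J R (g i) ≠ ⊤) :
    anorm J (2 * R) (∏ i, g i) ≤ 2 ^ (p - 1) * ∏ i, anorm J R (g i) := by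
  have hJu : UniqueDiffOn ℝ J := hJ ▸ uniqueDiffOn_Icc hab
  set Ar : Fin p → ℝ := fun i => (anorm J R (g i)).toReal with hAr
  have hArn : ∀ i, 0 ≤ Ar i := fun i => ENNReal.toReal_nonneg
  -- derivative bounds from the analytic norm
  have hb : ∀ i, ∀ n : ℕ, ∀ t ∈ J, ‖iteratedDerivWithin n (g i) J t‖ ≤ Ar i * (n ! * R ^ n) := by
    intro i n t ht
    have hpos : (0 : ℝ) < n ! * R ^ n := by positivity
    have h1 : (‖iteratedDerivWithin n (g i) J t‖₊ : ℝ≥0∞) / ENNReal.ofReal (n ! * R ^ n)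
        ≤ anorm J R (g i) := by
      refine le_trans ?_ (le_iSup (fun q : ℕ =>
        (⨆ t ∈ J, (‖iteratedDerivWithin q (g i) J t‖₊ : ℝ≥0∞)) /
          ENNReal.ofReal (q ! * R ^ q)) n)
      gcongr
      exact le_iSup₂_of_le t ht le_rfl
    have h2 : (‖iteratedDerivWithin n (g i) J t‖₊ : ℝ≥0∞)
        ≤ anorm J R (g i) * ENNReal.ofReal (n ! * R ^ n) := by
      rw [← ENNReal.div_le_iff_le_mul (Or.inl (ENNReal.ofReal_pos.mpr hpos).ne') (Or.inl ENNReal.ofReal_ne_top)]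
      exact h1
    have h3 := ENNReal.toReal_mono (by
      exact ENNReal.mul_ne_top (hfin i) ENNReal.ofReal_ne_top) h2
    rwa [ENNReal.toReal_mul, ENNReal.toReal_ofReal hpos.le, ENNReal.coe_toReal,
      coe_nnnorm] at h3
  have hcore := core hJu hR (Finset.univ : Finset (Fin p)) g Ar
    (fun i _ => hArn i) (fun i _ => hg i) (fun i _ => hb i)
  have hcard : (Finset.univ : Finset (Fin p)).card = p := by simp
  rw [hcard] at hcore
  -- the product as a pointwise function
  have hprodfn : (∏ i, g i) = fun x => ∏ i, g i x := by
    funext x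
    simp [Finset.prod_apply]
  -- main estimate
  rw [anorm]
  refine iSup_le fun n => ?_
  have hpos2 : (0 : ℝ) < n ! * (2 * R) ^ n := by positivity
  rw [ENNReal.div_le_iff_le_mul (Or.inl (ENNReal.ofReal_pos.mpr hpos2).ne') (Or.inl ENNReal.ofReal_ne_top)]
  refine iSup₂_le fun t ht => ?_
  -- rewrite RHS as ofReal
  have hRHS : (2 : ℝ≥0∞) ^ (p - 1) * (∏ i, anorm J R (g i)) * ENNReal.ofReal (n ! * (2 * R) ^ n)
      = ENNReal.ofReal (2 ^ (p - 1) * (∏ i, Ar i) * (n ! * (2 * R) ^ n)) := by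
    have e1 : ∏ i, anorm J R (g i) = ENNReal.ofReal (∏ i, Ar i) := by
      rw [ENNReal.ofReal_prod_of_nonneg (fun i _ => hArn i)]
      exact Finset.prod_congr rfl fun i _ => (ENNReal.ofReal_toReal (hfin i)).symm
    have e2 : (2 : ℝ≥0∞) ^ (p - 1) = ENNReal.ofReal (2 ^ (p - 1)) := by
      rw [ENNReal.ofReal_pow (by norm_num)]
      norm_num
    rw [e1, e2, ← ENNReal.ofReal_mul (by positivity), ← ENNReal.ofReal_mul (by positivity)]
  rw [hRHS, ← ENNReal.ofReal_coe_nnreal, coe_nnnorm]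
  refine ENNReal.ofReal_le_ofReal ?_
  -- real inequality
  have hchoose : (((n + p).choose p : ℕ) : ℝ) ≤ 2 ^ (p - 1) * 2 ^ n := by
    have h := choose_le_two_pow_pred (m := n + p) (k := p) (by omega)
    calc (((n + p).choose p : ℕ) : ℝ) ≤ (2 : ℝ) ^ (n + p - 1) := by exact_mod_cast h
      _ = 2 ^ (p - 1) * 2 ^ n := by rw [← pow_add]; congr 1; omega
  rw [hprodfn]
  calc ‖iteratedDerivWithin n (fun x => ∏ i, g i x) J t‖
      ≤ (∏ i, Ar i) * (n ! * R ^ n * ((n + p).choose p)) := hcore n t ht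
    _ ≤ (∏ i, Ar i) * (n ! * R ^ n * (2 ^ (p - 1) * 2 ^ n)) := by
        gcongr
    _ = 2 ^ (p - 1) * (∏ i, Ar i) * (n ! * (2 * R) ^ n) := by
        rw [mul_pow]
        ring
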